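/- Let Z′ be a random variable with finite range 𝒱, let W be a random variable with finite range, let G be a random variable with values in a standard Borel space such that the pair (Z′, W) is independent of G, and let Z = φ(Z′, W, G) for a measurable function φ with values in a finite set. Then H(Z′ | W) − H(Z | W, G) ≤ E[ log |{ζ ∈ 𝒱 : φ(ζ, W, G) = φ(Z′, W, G)}| ], i.e., the difference of entropies is bounded above by the expected logarithm of the cardinality of the aligned image set containing the realized value of Z′. -/

import Mathlib

open MeasureTheory ProbabilityTheory

noncomputable section

/-- Truncation of a real number toward zero. -/
def truncZ (x : ℝ) : ℤ := if 0 ≤ x then ⌊x⌋ else ⌈x⌉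

/-- `pbar P lam = ⌊P ^ (lam / 2)⌋`, i.e. `P̄^lam`. -/
def pbar (P lam : ℝ) : ℤ := ⌊P ^ (lam / 2)⌋

/-- The alphabet `𝒳_lam = {0, 1, …, P̄^lam − 1}`. -/
def Xalph (P lam : ℝ) : Set ℤ := {x : ℤ | 0 ≤ x ∧ x < pbar P lam}

/-- `(X)_lam = X − P̄^lam ⌊X / P̄^lam⌋` (division truncated toward zero). -/
def lowPart (P lam : ℝ) (X : ℤ) : ℤ := X - pbar P lam * (X.tdiv (pbar P lam))

/-- `(X)^hi_lo = ⌊(X − P̄^hi ⌊X / P̄^hi⌋) / P̄^lo⌋` (divisions truncated toward zero). -/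
def midPart (P lo hi : ℝ) (X : ℤ) : ℤ := (lowPart P hi X).tdiv (pbar P lo)

/-- Shannon entropy (natural log) of a random variable with (essentially) finite range. -/
def shEntropy {Ω : Type*} [MeasurableSpace Ω] (μ : Measure Ω) {α : Type*} (X : Ω → α) : ℝ :=
  ∑' a : α, Real.negMulLog (μ (X ⁻¹' {a})).toReal

/-- Conditional Shannon entropy `H(X | Y)`, defined through conditional expectations of
indicators with respect to the σ-algebra generated by `Y`. -/
def shCondEntropy {Ω : Type*} [MeasurableSpace Ω] (μ : Measure Ω) {α β : Type*}
    [MeasurableSpace β] (X : Ω → α) (Y : Ω → β) : ℝ :=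
  ∫ ω, ∑' a : α,
    Real.negMulLog
      ((μ[Set.indicator (X ⁻¹' {a}) (fun _ => (1 : ℝ)) | MeasurableSpace.comap Y inferInstance]) ω)
    ∂μ

/-- `X` and `Y` are conditionally independent given `W`. -/
def CondIndepGiven {Ω α β γ : Type*} [MeasurableSpace Ω] [MeasurableSpace α] [MeasurableSpace β]
    [MeasurableSpace γ] (μ : Measure Ω) (W : Ω → γ) (X : Ω → α) (Y : Ω → β) : Prop :=
  ∀ (A : Set α) (B : Set β), MeasurableSet A → MeasurableSet B →
    (μ[Set.indicator (X ⁻¹' A ∩ Y ⁻¹' B) (fun _ => (1 : ℝ)) |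
        MeasurableSpace.comap W inferInstance])
      =ᵐ[μ]
      fun ω =>
        (μ[Set.indicator (X ⁻¹' A) (fun _ => (1 : ℝ)) | MeasurableSpace.comap W inferInstance]) ω *
        (μ[Set.indicator (Y ⁻¹' B) (fun _ => (1 : ℝ)) | MeasurableSpace.comap W inferInstance]) ω

/-- The conditional distribution of `g` given `V` is a.s. absolutely continuous with
density bounded above by `fmax`: equivalently, the conditional probability of any
measurable set `S` is a.s. at most `fmax · volume S`. -/
def CondDensityBounded {Ω β : Type*} [MeasurableSpace Ω] [MeasurableSpace β]
    (μ : Measure Ω) (g : Ω → ℝ) (V : Ω → β) (fmax : ℝ) : Prop :=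
  ∀ S : Set ℝ, MeasurableSet S →
    ∀ᵐ ω ∂μ,
      ENNReal.ofReal
          ((μ[Set.indicator (g ⁻¹' S) (fun _ => (1 : ℝ)) |
              MeasurableSpace.comap V inferInstance]) ω)
        ≤ ENNReal.ofReal fmax * volume S

/-- Density part of the bounded-density assumption for a family `g`, conditioned on a
random variable `W`: for disjoint subfamilies `s, t`, the conditional joint distribution of
`(g i)_{i ∈ s}` given `(W, (g j)_{j ∈ t})` is a.s. absolutely continuous with joint density
bounded above by `fmax ^ |s|`. -/
def CondBoundedDensityFamily {Ω ι γ : Type*} [MeasurableSpace Ω] [MeasurableSpace γ]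
    [DecidableEq ι] (μ : Measure Ω) (W : Ω → γ) (g : ι → Ω → ℝ) (fmax : ℝ) : Prop :=
  ∀ (s t : Finset ι), s.Nonempty → Disjoint s t →
    ∀ S : Set (s → ℝ), MeasurableSet S →
      ∀ᵐ ω ∂μ,
        ENNReal.ofReal
            ((μ[Set.indicator ((fun ω (i : s) => g i ω) ⁻¹' S) (fun _ => (1 : ℝ)) |
                MeasurableSpace.comap (fun ω => (W ω, fun j : t => g j ω)) inferInstance]) ω)
          ≤ ENNReal.ofReal (fmax ^ s.card) * volume S

/-- The `(Δ₁, Δ₂, fmax)`-bounded-density assumption for a family `g` of real random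
variables (Definition 4 of the paper). -/
def BoundedDensityFamily {Ω ι : Type*} [MeasurableSpace Ω] [DecidableEq ι]
    (μ : Measure Ω) (g : ι → Ω → ℝ) (Δ₁ Δ₂ fmax : ℝ) : Prop :=
  (∀ i, ∀ᵐ ω ∂μ, Δ₁ ≤ |g i ω| ∧ |g i ω| ≤ Δ₂) ∧
  ∀ (s t : Finset ι), s.Nonempty → Disjoint s t →
    ∀ S : Set (s → ℝ), MeasurableSet S →
      ∀ᵐ ω ∂μ,
        ENNReal.ofReal
            ((μ[Set.indicator ((fun ω (i : s) => g i ω) ⁻¹' S) (fun _ => (1 : ℝ)) |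
                MeasurableSpace.comap (fun ω (j : t) => g j ω) inferInstance]) ω)
          ≤ ENNReal.ofReal (fmax ^ s.card) * volume S

/-- Partial sums `Λ_i = λ₁ + ⋯ + λ_i` of the power levels (0-based: `cumSum lam i`
sums the first `i` entries). -/
def cumSum {M : ℕ} (lam : Fin M → ℝ) (i : ℕ) : ℝ :=
  ∑ r ∈ Finset.univ.filter (fun r : Fin M => (r : ℕ) < i), lam r

end


section Aux

/-- |negMulLog x| ≤ 1 on [0,1]. -/
lemma aux_negMulLog_abs_le {x : ℝ} (h0 : 0 ≤ x) (h1 : x ≤ 1) : |Real.negMulLog x| ≤ 1 := by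
  rcases eq_or_lt_of_le h0 with h | hpos
  · simp [← h]
  · rw [abs_le]
    constructor
    · linarith [Real.negMulLog_nonneg h0 h1]
    · have hlog : Real.log x⁻¹ ≤ x⁻¹ - 1 := Real.log_le_sub_one_of_pos (by positivity)
      rw [Real.log_inv] at hlog
      have hx : x * x⁻¹ = 1 := mul_inv_cancel₀ (ne_of_gt hpos)
      have := mul_le_mul_of_nonneg_left hlog h0
      simp only [Real.negMulLog]
      nlinarith

/-- Per-fiber log-sum inequality. -/
lemma aux_fiber_ineq {α : Type*} (s : Finset α) (p : α → ℝ) (hp : ∀ a ∈ s, 0 ≤ p a) :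
    ∑ a ∈ s, Real.negMulLog (p a) - Real.negMulLog (∑ a ∈ s, p a)
      ≤ (∑ a ∈ s, p a) * Real.log s.card := by
  rcases s.eq_empty_or_nonempty with rfl | hne
  · simp
  have hn : (0:ℝ) < s.card := by exact_mod_cast Finset.card_pos.mpr hne
  set n : ℝ := (s.card : ℝ) with hndef
  set Q := ∑ a ∈ s, p a with hQdef
  have hQ0 : 0 ≤ Q := Finset.sum_nonneg hp
  have key : ∀ a ∈ s,
      Real.negMulLog (p a) + p a * Real.log Q - p a * Real.log n ≤ Q / n - p a := by
    intro a ha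
    rcases eq_or_lt_of_le (hp a ha) with h | hpos
    · simp only [← h, Real.negMulLog_zero, zero_mul, add_zero, sub_zero]
      positivity
    · have hQpos : 0 < Q := lt_of_lt_of_le hpos (Finset.single_le_sum hp ha)
      have hlog : Real.log (Q / (n * p a)) ≤ Q / (n * p a) - 1 :=
        Real.log_le_sub_one_of_pos (by positivity)
      have hexpand : Real.log (Q / (n * p a)) = Real.log Q - Real.log n - Real.log (p a) := by
        rw [Real.log_div (ne_of_gt hQpos) (by positivity),
          Real.log_mul (ne_of_gt hn) (ne_of_gt hpos)]
        ring
      rw [hexpand] at hlog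
      have hmul := mul_le_mul_of_nonneg_left hlog (le_of_lt hpos)
      have hra : p a * (Q / (n * p a) - 1) = Q / n - p a := by
        field_simp
      rw [hra] at hmul
      simp only [Real.negMulLog]
      nlinarith
  have hsum := Finset.sum_le_sum key
  have hL : ∑ a ∈ s, (Real.negMulLog (p a) + p a * Real.log Q - p a * Real.log n)
      = (∑ a ∈ s, Real.negMulLog (p a)) + Q * Real.log Q - Q * Real.log n := by
    rw [Finset.sum_sub_distrib, Finset.sum_add_distrib, ← Finset.sum_mul, ← Finset.sum_mul]
  have hR : ∑ a ∈ s, (Q / n - p a) = 0 := by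
    rw [Finset.sum_sub_distrib, Finset.sum_const, nsmul_eq_mul, ← hQdef, ← hndef]
    field_simp
    ring
  rw [hL, hR] at hsum
  have : Real.negMulLog Q = -(Q * Real.log Q) := by rw [Real.negMulLog]; ring
  rw [this]
  linarith

/-- Grouped entropy inequality over fibers of `ψ`. -/
lemma aux_group_ineq {α δ : Type*} [Fintype α] [Fintype δ] [DecidableEq δ]
    (p : α → ℝ) (hp : ∀ a, 0 ≤ p a) (ψ : α → δ) :
    ∑ a, Real.negMulLog (p a)
        - ∑ d, Real.negMulLog (∑ a ∈ Finset.univ.filter (fun a => ψ a = d), p a)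
      ≤ ∑ a, p a * Real.log ((Finset.univ.filter (fun b => ψ b = ψ a)).card) := by
  classical
  have h1 : ∑ a, Real.negMulLog (p a)
      = ∑ d, ∑ a ∈ Finset.univ.filter (fun a => ψ a = d), Real.negMulLog (p a) :=
    (Finset.sum_fiberwise _ _ _).symm
  have h2 : ∑ a, p a * Real.log ((Finset.univ.filter (fun b => ψ b = ψ a)).card)
      = ∑ d, ∑ a ∈ Finset.univ.filter (fun a => ψ a = d),
          p a * Real.log ((Finset.univ.filter (fun b => ψ b = d)).card) := by
    rw [← Finset.sum_fiberwise Finset.univ ψ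
      (fun a => p a * Real.log ((Finset.univ.filter (fun b => ψ b = ψ a)).card))]
    refine Finset.sum_congr rfl fun d _ => Finset.sum_congr rfl fun a ha => ?_
    rw [(Finset.mem_filter.1 ha).2]
  rw [h1, h2, ← Finset.sum_sub_distrib]
  refine Finset.sum_le_sum fun d _ => ?_
  have := aux_fiber_ineq (Finset.univ.filter (fun a => ψ a = d)) p (fun a _ => hp a)
  rw [← Finset.sum_mul]
  exact this

/-- Integral over an independent set factorizes. -/
lemma aux_setIntegral_indep {Ω : Type*} {mx m' : MeasurableSpace Ω} {m0 : MeasurableSpace Ω}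
    {μ : Measure Ω} [IsProbabilityMeasure μ] (hlex : mx ≤ m0) (hle' : m' ≤ m0)
    (hind : ProbabilityTheory.Indep mx m' μ) {X : Ω → ℝ} (hX : Integrable X μ)
    (hXm : StronglyMeasurable[mx] X) {B : Set Ω} (hB : MeasurableSet[m'] B) :
    ∫ ω in B, X ω ∂μ = (μ B).toReal * ∫ ω, X ω ∂μ := by
  have h := condExp_indep_eq hlex hle' hXm hind
  rw [← setIntegral_condExp hle' hX hB]
  calc ∫ ω in B, (μ[X|m']) ω ∂μ = ∫ _ω in B, (∫ x, X x ∂μ) ∂μ :=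
        integral_congr_ae (ae_restrict_of_ae h)
    _ = (μ B).toReal * ∫ ω, X ω ∂μ := by rw [setIntegral_const, smul_eq_mul]; rfl

/-- Conditioning on extra independent information does not change the conditional
expectation. -/
lemma aux_condexp_sup_indep {Ω : Type*} {mx m₂ m₃ : MeasurableSpace Ω} {m0 : MeasurableSpace Ω}
    {μ : Measure Ω} [IsProbabilityMeasure μ] (hlex : mx ≤ m0) (hle₂ : m₂ ≤ m0)
    (hle₃ : m₃ ≤ m0) (hind : ProbabilityTheory.Indep (mx ⊔ m₂) m₃ μ) {f : Ω → ℝ}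
    (hf : Integrable f μ) (hfm : StronglyMeasurable[mx] f) :
    μ[f|m₂] =ᵐ[μ] μ[f|m₂ ⊔ m₃] := by
  have hle : m₂ ⊔ m₃ ≤ m0 := sup_le hle₂ hle₃
  have hle12 : mx ⊔ m₂ ≤ m0 := sup_le hlex hle₂
  refine ae_eq_condExp_of_forall_setIntegral_eq hle hf
    (fun s _ _ => integrable_condExp.integrableOn) (fun s hs _ => ?_)
    (StronglyMeasurable.aestronglyMeasurable (stronglyMeasurable_condExp.mono le_sup_left))
  -- π-system induction on `m₂ ⊔ m₃`
  set PS : Set (Set Ω) := {s | ∃ A, MeasurableSet[m₂] A ∧ ∃ B, MeasurableSet[m₃] B ∧ s = A ∩ B}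
    with hPS
  have hgen : m₂ ⊔ m₃ = MeasurableSpace.generateFrom PS := by
    refine le_antisymm (sup_le ?_ ?_) (MeasurableSpace.generateFrom_le ?_)
    · intro t ht
      exact MeasurableSpace.measurableSet_generateFrom
        ⟨t, ht, Set.univ, MeasurableSet.univ, (Set.inter_univ t).symm⟩
    · intro t ht
      exact MeasurableSpace.measurableSet_generateFrom
        ⟨Set.univ, MeasurableSet.univ, t, ht, (Set.univ_inter t).symm⟩
    · rintro t ⟨A, hA, B, hB, rfl⟩
      exact MeasurableSet.inter ((le_sup_left : m₂ ≤ m₂ ⊔ m₃) _ hA)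
        ((le_sup_right : m₃ ≤ m₂ ⊔ m₃) _ hB)
  have hpi : IsPiSystem PS := by
    rintro t₁ ⟨A₁, hA₁, B₁, hB₁, rfl⟩ t₂ ⟨A₂, hA₂, B₂, hB₂, rfl⟩ _
    exact ⟨A₁ ∩ A₂, hA₁.inter hA₂, B₁ ∩ B₂, hB₁.inter hB₂, by
      rw [Set.inter_inter_inter_comm]⟩
  have hint_g : Integrable (μ[f|m₂]) μ := integrable_condExp
  have main : ∀ ⦃t : Set Ω⦄, MeasurableSet[m₂ ⊔ m₃] t →
      ∫ x in t, (μ[f|m₂]) x ∂μ = ∫ x in t, f x ∂μ := by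
    refine MeasurableSpace.induction_on_inter (m := m₂ ⊔ m₃) hgen hpi (by simp) ?_ ?_ ?_
    · rintro t ⟨A, hA, B, hB, rfl⟩
      have hgind : ∫ x in B, (A.indicator (μ[f|m₂])) x ∂μ
          = (μ B).toReal * ∫ x, (A.indicator (μ[f|m₂])) x ∂μ :=
        aux_setIntegral_indep hle12 hle₃ hind (hint_g.indicator (hle₂ _ hA))
          ((stronglyMeasurable_condExp.indicator hA).mono le_sup_right) hB
      have hfind : ∫ x in B, (A.indicator f) x ∂μ
          = (μ B).toReal * ∫ x, (A.indicator f) x ∂μ :=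
        aux_setIntegral_indep hle12 hle₃ hind (hf.indicator (hle₂ _ hA))
          ((hfm.mono le_sup_left).indicator ((le_sup_right : m₂ ≤ mx ⊔ m₂) _ hA)) hB
      have e₁ : ∫ x in A ∩ B, (μ[f|m₂]) x ∂μ = ∫ x in B, (A.indicator (μ[f|m₂])) x ∂μ := by
        rw [setIntegral_indicator (hle₂ _ hA), Set.inter_comm]
      have e₂ : ∫ x in A ∩ B, f x ∂μ = ∫ x in B, (A.indicator f) x ∂μ := by
        rw [setIntegral_indicator (hle₂ _ hA), Set.inter_comm]
      rw [e₁, e₂, hgind, hfind, integral_indicator (hle₂ _ hA),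
        integral_indicator (hle₂ _ hA), setIntegral_condExp hle₂ hf hA]
    · intro t ht hC
      have ht0 : MeasurableSet t := hle _ ht
      have h₁ := integral_add_compl ht0 hint_g
      have h₂ := integral_add_compl ht0 hf
      have htot : ∫ x, (μ[f|m₂]) x ∂μ = ∫ x, f x ∂μ := integral_condExp hle₂
      linarith
    · intro g hdisj hmeas hC
      have hmeas0 : ∀ i, MeasurableSet (g i) := fun i => hle _ (hmeas i)
      rw [integral_iUnion hmeas0 hdisj hint_g.integrableOn,
        integral_iUnion hmeas0 hdisj hf.integrableOn]
      exact tsum_congr hC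
  exact main hs

lemma aux_comap_prodMk {Ω X Y : Type*} [MeasurableSpace X] [MeasurableSpace Y]
    (u : Ω → X) (v : Ω → Y) :
    MeasurableSpace.comap (fun ω => (u ω, v ω)) inferInstance
      = MeasurableSpace.comap u inferInstance ⊔ MeasurableSpace.comap v inferInstance := by
  rw [show (inferInstance : MeasurableSpace (X × Y))
      = MeasurableSpace.comap Prod.fst inferInstance ⊔ MeasurableSpace.comap Prod.snd inferInstance
    from rfl, MeasurableSpace.comap_sup, MeasurableSpace.comap_comp, MeasurableSpace.comap_comp]
  rfl

end Aux

noncomputable section SgmAux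

/-- The σ-algebra generated by a map. -/
def sgm {Ω X : Type*} [MeasurableSpace X] (f : Ω → X) : MeasurableSpace Ω :=
  MeasurableSpace.comap f inferInstance

lemma sgm_measurable {Ω X : Type*} [MeasurableSpace X] (f : Ω → X) : Measurable[sgm f] f :=
  Measurable.of_comap_le le_rfl

lemma sgm_measurableSet {Ω X : Type*} [MeasurableSpace X] {f : Ω → X} {S : Set X}
    (hS : MeasurableSet S) : MeasurableSet[sgm f] (f ⁻¹' S) :=
  sgm_measurable f hS

lemma sgm_prodMk {Ω X Y : Type*} [MeasurableSpace X] [MeasurableSpace Y] (u : Ω → X) (v : Ω → Y) :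
    sgm (fun ω => (u ω, v ω)) = sgm u ⊔ sgm v :=
  aux_comap_prodMk u v

end SgmAux

open MeasureTheory ProbabilityTheory in
theorem stmt_17 (Ω α β γ δ : Type) [MeasurableSpace Ω] (μ : Measure Ω)
    [IsProbabilityMeasure μ]
    [Fintype α] [MeasurableSpace α] [MeasurableSingletonClass α]
    [Fintype β] [MeasurableSpace β] [MeasurableSingletonClass β]
    [MeasurableSpace γ] [StandardBorelSpace γ]
    [Fintype δ] [MeasurableSpace δ] [MeasurableSingletonClass δ]
    (Z' : Ω → α) (W : Ω → β) (G : Ω → γ) (φ : α × β × γ → δ)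
    (hZ' : Measurable Z') (hW : Measurable W) (hG : Measurable G) (hφ : Measurable φ)
    (hindep : IndepFun (fun ω => (Z' ω, W ω)) G μ) :
    shCondEntropy μ Z' W
        - shCondEntropy μ (fun ω => φ (Z' ω, W ω, G ω)) (fun ω => (W ω, G ω))
      ≤ ∫ ω, Real.log
          (({ζ : α | φ (ζ, W ω, G ω) = φ (Z' ω, W ω, G ω)}.ncard : ℝ)) ∂μ := by
  classical
  -- ambient objects
  have hZmeas : Measurable (fun ω => φ (Z' ω, W ω, G ω)) := hφ.comp (hZ'.prodMk (hW.prodMk hG))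
  have hpairMeas : Measurable (fun ω => (W ω, G ω)) := hW.prodMk hG
  have hm_le : sgm (fun ω => (W ω, G ω)) ≤ (inferInstance : MeasurableSpace Ω) :=
    hpairMeas.comap_le
  have hmW_le : sgm W ≤ (inferInstance : MeasurableSpace Ω) := hW.comap_le
  have hm_eq : sgm (fun ω => (W ω, G ω)) = sgm W ⊔ sgm G := sgm_prodMk W G
  have hindep' : ProbabilityTheory.Indep (sgm Z' ⊔ sgm W) (sgm G) μ := by
    have h : ProbabilityTheory.Indep (sgm (fun ω => (Z' ω, W ω))) (sgm G) μ := hindep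
    rwa [sgm_prodMk Z' W] at h
  -- indicator functions and conditional expectations
  set ind : α → Ω → ℝ := fun a => Set.indicator (Z' ⁻¹' {a}) (fun _ => (1 : ℝ)) with hind_def
  set indZ : δ → Ω → ℝ :=
    fun d => Set.indicator ((fun ω => φ (Z' ω, W ω, G ω)) ⁻¹' {d}) (fun _ => (1 : ℝ)) with hindZ_def
  have hindInt : ∀ a, Integrable (ind a) μ :=
    fun a => (integrable_const (1 : ℝ)).indicator (hZ' (measurableSet_singleton a))
  have hindZInt : ∀ d, Integrable (indZ d) μ :=
    fun d => (integrable_const (1 : ℝ)).indicator (hZmeas (measurableSet_singleton d))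
  set p : α → Ω → ℝ := fun a => μ[ind a | sgm (fun ω => (W ω, G ω))] with hp_def
  set pW : α → Ω → ℝ := fun a => μ[ind a | sgm W] with hpW_def
  set q : δ → Ω → ℝ := fun d => μ[indZ d | sgm (fun ω => (W ω, G ω))] with hq_def
  -- the log-cardinality functions
  set L : α → Ω → ℝ := fun a ω => Real.log
    (((Finset.univ.filter fun ζ : α => φ (ζ, W ω, G ω) = φ (a, W ω, G ω)).card : ℝ)) with hL_def
  -- indicator of the aligned event, measurable wrt (W, G)
  set c : α → δ → Ω → ℝ := fun a d =>
    Set.indicator ((fun ω => (W ω, G ω)) ⁻¹' {x : β × γ | φ (a, x.1, x.2) = d})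
      (fun _ => (1 : ℝ)) with hc_def
  have hc_sm : ∀ a d, StronglyMeasurable[sgm (fun ω => (W ω, G ω))] (c a d) := by
    intro a d
    refine stronglyMeasurable_const.indicator (sgm_measurableSet ?_)
    exact (hφ.comp (measurable_const.prodMk measurable_id)) (measurableSet_singleton d)
  -- basic bounds on the conditional expectations
  have hp0 : ∀ a, 0 ≤ᵐ[μ] p a := fun a =>
    condExp_nonneg (Filter.Eventually.of_forall fun ω =>
      Set.indicator_nonneg (fun _ _ => zero_le_one) ω)
  have hq0 : ∀ d, 0 ≤ᵐ[μ] q d := fun d =>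
    condExp_nonneg (Filter.Eventually.of_forall fun ω =>
      Set.indicator_nonneg (fun _ _ => zero_le_one) ω)
  have hp1 : ∀ a, p a ≤ᵐ[μ] fun _ => (1 : ℝ) := by
    intro a
    have h := condExp_mono (m := sgm (fun ω => (W ω, G ω))) (hindInt a) (integrable_const 1)
      (Filter.Eventually.of_forall fun ω => by
        by_cases h : ω ∈ Z' ⁻¹' {a} <;> simp [hind_def, Set.indicator_apply, h])
    rwa [condExp_const hm_le] at h
  have hq1 : ∀ d, q d ≤ᵐ[μ] fun _ => (1 : ℝ) := by
    intro d
    have h := condExp_mono (m := sgm (fun ω => (W ω, G ω))) (hindZInt d) (integrable_const 1)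
      (Filter.Eventually.of_forall fun ω => by
        by_cases h : ω ∈ (fun ω => φ (Z' ω, W ω, G ω)) ⁻¹' {d} <;>
          simp [hindZ_def, Set.indicator_apply, h])
    rwa [condExp_const hm_le] at h
  -- independence: conditioning on W equals conditioning on (W, G)
  have hpW_eq : ∀ a, pW a =ᵐ[μ] p a := by
    intro a
    have hsm : StronglyMeasurable[sgm Z'] (ind a) :=
      stronglyMeasurable_const.indicator (sgm_measurableSet (measurableSet_singleton a))
    have h := aux_condexp_sup_indep (mx := sgm Z') (m₂ := sgm W) (m₃ := sgm G)
      hZ'.comap_le hW.comap_le hG.comap_le hindep' (hindInt a) hsm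
    rw [← hm_eq] at h
    rw [hpW_def, hp_def]
    exact h
  -- integrability of products
  have hcind_int : ∀ a d, Integrable (c a d * ind a) μ := by
    intro a d
    refine Integrable.mono' (integrable_const (1 : ℝ))
      ((((hc_sm a d).mono hm_le).aestronglyMeasurable).mul
        ((stronglyMeasurable_const.indicator
          (hZ' (measurableSet_singleton a))).aestronglyMeasurable)) ?_
    refine Filter.Eventually.of_forall fun ω => ?_
    simp only [Pi.mul_apply, hc_def, hind_def, Set.indicator_apply, Real.norm_eq_abs]
    split_ifs <;> norm_num
  -- decomposition of the indicator of {Z = d}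
  have hpoint : ∀ d, indZ d = ∑ a, c a d * ind a := by
    intro d
    funext ω
    rw [Finset.sum_apply]
    rw [Finset.sum_eq_single (Z' ω)]
    · have h1 : ind (Z' ω) ω = 1 := by simp [hind_def, Set.indicator_apply]
      simp only [Pi.mul_apply, h1, mul_one]
      by_cases h : φ (Z' ω, W ω, G ω) = d <;>
        simp [hc_def, hindZ_def, Set.indicator_apply, h]
    · intro b _ hb
      have h0 : ind b ω = 0 := by
        simp only [hind_def, Set.indicator_apply, Set.mem_preimage, Set.mem_singleton_iff]
        rw [if_neg fun h => hb h.symm]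
      simp [h0]
    · intro h; exact absurd (Finset.mem_univ _) h
  -- conditional distribution of Z given (W, G)
  have hq_eq : ∀ d, q d =ᵐ[μ] fun ω => ∑ a, c a d ω * p a ω := by
    intro d
    have h1 : q d =ᵐ[μ] ∑ a, μ[c a d * ind a | sgm (fun ω => (W ω, G ω))] := by
      rw [hq_def]
      simp only [hpoint d]
      exact condExp_finsetSum (fun a _ => hcind_int a d) _
    have h2 : ∀ a, μ[c a d * ind a | sgm (fun ω => (W ω, G ω))]
        =ᵐ[μ] c a d * p a :=
      fun a => condExp_mul_of_stronglyMeasurable_left (hc_sm a d) (hcind_int a d) (hindInt a)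
    have h3 : ∀ᵐ ω ∂μ, ∀ a, (μ[c a d * ind a | sgm (fun ω => (W ω, G ω))]) ω
        = c a d ω * p a ω := ae_all_iff.2 fun a => h2 a
    filter_upwards [h1, h3] with ω hω1 hω3
    rw [hω1, Finset.sum_apply]
    exact Finset.sum_congr rfl fun a _ => hω3 a
  -- measurability and bounds for L
  have hsgmPair : Measurable[sgm (fun ω => (W ω, G ω))] (fun ω => (W ω, G ω)) :=
    sgm_measurable _
  have hsgmW : Measurable[sgm (fun ω => (W ω, G ω))] W := measurable_fst.comp hsgmPair
  have hsgmG : Measurable[sgm (fun ω => (W ω, G ω))] G := measurable_snd.comp hsgmPair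
  have hLeq : ∀ a : α, L a
      = fun ω => Real.log (∑ ζ : α, if φ (ζ, W ω, G ω) = φ (a, W ω, G ω) then (1 : ℝ) else 0) := by
    intro a
    funext ω
    simp only [hL_def]
    rw [Finset.card_filter]
    push_cast
    rfl
  have hLm : ∀ a, Measurable[sgm (fun ω => (W ω, G ω))] (L a) := by
    intro a
    rw [hLeq a]
    refine Real.measurable_log.comp ?_
    refine Finset.measurable_sum _ fun ζ _ => Measurable.ite ?_ measurable_const measurable_const
    exact measurableSet_eq_fun
      (hφ.comp (measurable_const.prodMk (hsgmW.prodMk hsgmG)))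
      (hφ.comp (measurable_const.prodMk (hsgmW.prodMk hsgmG)))
  have hLm0 : ∀ a, Measurable (L a) := fun a => (hLm a).mono hm_le le_rfl
  have hLbound : ∀ a ω, 0 ≤ L a ω ∧ L a ω ≤ Real.log (Fintype.card α) := by
    intro a ω
    have hmem : a ∈ Finset.univ.filter fun ζ : α => φ (ζ, W ω, G ω) = φ (a, W ω, G ω) := by
      simp
    have hpos : 0 < (Finset.univ.filter
        fun ζ : α => φ (ζ, W ω, G ω) = φ (a, W ω, G ω)).card :=
      Finset.card_pos.mpr ⟨a, hmem⟩
    have hle : (Finset.univ.filter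
        fun ζ : α => φ (ζ, W ω, G ω) = φ (a, W ω, G ω)).card ≤ Fintype.card α :=
      (Finset.card_filter_le _ _).trans_eq Finset.card_univ
    constructor
    · exact Real.log_nonneg (by exact_mod_cast hpos)
    · exact Real.log_le_log (by exact_mod_cast hpos) (by exact_mod_cast hle)
  -- integrability of the three integrands
  have hp0' : ∀ᵐ ω ∂μ, ∀ a, 0 ≤ p a ω := ae_all_iff.2 hp0
  have hp1' : ∀ᵐ ω ∂μ, ∀ a, p a ω ≤ 1 := ae_all_iff.2 hp1
  have hq0' : ∀ᵐ ω ∂μ, ∀ d, 0 ≤ q d ω := ae_all_iff.2 hq0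
  have hq1' : ∀ᵐ ω ∂μ, ∀ d, q d ω ≤ 1 := ae_all_iff.2 hq1
  have hpMeas : ∀ a, Measurable (p a) :=
    fun a => stronglyMeasurable_condExp.measurable.mono hm_le le_rfl
  have hqMeas : ∀ d, Measurable (q d) :=
    fun d => stronglyMeasurable_condExp.measurable.mono hm_le le_rfl
  have hIntF : Integrable (fun ω => ∑ a, Real.negMulLog (p a ω)) μ := by
    refine Integrable.mono' (integrable_const ((Fintype.card α : ℝ))) ?_ ?_
    · exact (Finset.measurable_sum _ fun a _ =>
        Real.continuous_negMulLog.measurable.comp (hpMeas a)).aestronglyMeasurable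
    · filter_upwards [hp0', hp1'] with ω h0 h1
      rw [Real.norm_eq_abs]
      calc |∑ a, Real.negMulLog (p a ω)| ≤ ∑ a, |Real.negMulLog (p a ω)| :=
            Finset.abs_sum_le_sum_abs _ _
        _ ≤ ∑ _a : α, (1 : ℝ) :=
            Finset.sum_le_sum fun a _ => aux_negMulLog_abs_le (h0 a) (h1 a)
        _ = (Fintype.card α : ℝ) := by simp
  have hIntQ : Integrable (fun ω => ∑ d, Real.negMulLog (q d ω)) μ := by
    refine Integrable.mono' (integrable_const ((Fintype.card δ : ℝ))) ?_ ?_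
    · exact (Finset.measurable_sum _ fun d _ =>
        Real.continuous_negMulLog.measurable.comp (hqMeas d)).aestronglyMeasurable
    · filter_upwards [hq0', hq1'] with ω h0 h1
      rw [Real.norm_eq_abs]
      calc |∑ d, Real.negMulLog (q d ω)| ≤ ∑ d, |Real.negMulLog (q d ω)| :=
            Finset.abs_sum_le_sum_abs _ _
        _ ≤ ∑ _d : δ, (1 : ℝ) :=
            Finset.sum_le_sum fun d _ => aux_negMulLog_abs_le (h0 d) (h1 d)
        _ = (Fintype.card δ : ℝ) := by simp
  have hIntLp : ∀ a, Integrable (fun ω => L a ω * p a ω) μ := by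
    intro a
    refine Integrable.mono' (integrable_const (Real.log (Fintype.card α))) ?_ ?_
    · exact ((hLm0 a).mul (hpMeas a)).aestronglyMeasurable
    · filter_upwards [hp0', hp1'] with ω h0 h1
      rw [Real.norm_eq_abs, abs_mul, abs_of_nonneg (hLbound a ω).1, abs_of_nonneg (h0 a)]
      calc L a ω * p a ω ≤ L a ω * 1 :=
            mul_le_mul_of_nonneg_left (h1 a) (hLbound a ω).1
        _ = L a ω := mul_one _
        _ ≤ Real.log (Fintype.card α) := (hLbound a ω).2
  have hIntT : Integrable (fun ω => ∑ a, L a ω * p a ω) μ :=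
    integrable_finset_sum _ fun a _ => hIntLp a
  have hIntLind : ∀ a, Integrable (L a * ind a) μ := by
    intro a
    refine Integrable.mono' (integrable_const (Real.log (Fintype.card α))) ?_ ?_
    · exact ((hLm0 a).mul
        (stronglyMeasurable_const.indicator
          (hZ' (measurableSet_singleton a))).measurable).aestronglyMeasurable
    · refine Filter.Eventually.of_forall fun ω => ?_
      rw [Real.norm_eq_abs, Pi.mul_apply, abs_mul, abs_of_nonneg (hLbound a ω).1]
      have hia : |ind a ω| ≤ 1 := by
        simp only [hind_def, Set.indicator_apply]
        split_ifs <;> norm_num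
      calc L a ω * |ind a ω| ≤ L a ω * 1 :=
            mul_le_mul_of_nonneg_left hia (hLbound a ω).1
        _ = L a ω := mul_one _
        _ ≤ Real.log (Fintype.card α) := (hLbound a ω).2
  -- the pointwise entropy inequality
  have key : ∀ᵐ ω ∂μ,
      (∑ a, Real.negMulLog (p a ω)) - ∑ d, Real.negMulLog (q d ω)
        ≤ ∑ a, L a ω * p a ω := by
    have hqall : ∀ᵐ ω ∂μ, ∀ d, q d ω = ∑ a, c a d ω * p a ω :=
      ae_all_iff.2 fun d => hq_eq d
    filter_upwards [hp0', hqall] with ω h0 hq'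
    have hgi := aux_group_ineq (fun a => p a ω) h0 (fun a => φ (a, W ω, G ω))
    have hQ : ∀ d, q d ω
        = ∑ a ∈ Finset.univ.filter (fun a => φ (a, W ω, G ω) = d), p a ω := by
      intro d
      rw [hq' d, Finset.sum_filter]
      refine Finset.sum_congr rfl fun a _ => ?_
      by_cases h : φ (a, W ω, G ω) = d <;>
        simp [hc_def, Set.indicator_apply, h]
    have hT : ∀ a : α, L a ω
        = Real.log (((Finset.univ.filter
            (fun b : α => φ (b, W ω, G ω) = φ (a, W ω, G ω))).card : ℝ)) := fun a => rfl
    calc (∑ a, Real.negMulLog (p a ω)) - ∑ d, Real.negMulLog (q d ω)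
        = (∑ a, Real.negMulLog (p a ω))
          - ∑ d, Real.negMulLog
              (∑ a ∈ Finset.univ.filter (fun a => φ (a, W ω, G ω) = d), p a ω) := by
          rw [show (∑ d, Real.negMulLog (q d ω))
              = ∑ d, Real.negMulLog
                  (∑ a ∈ Finset.univ.filter (fun a => φ (a, W ω, G ω) = d), p a ω) from
            Finset.sum_congr rfl fun d _ => by rw [hQ d]]
      _ ≤ ∑ a, p a ω * Real.log (((Finset.univ.filter
            (fun b : α => φ (b, W ω, G ω) = φ (a, W ω, G ω))).card : ℝ)) := hgi
      _ = ∑ a, L a ω * p a ω := by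
          refine Finset.sum_congr rfl fun a _ => ?_
          rw [hT a, mul_comm]
  -- integrate the pointwise inequality
  have hmain : (∫ ω, ∑ a, Real.negMulLog (p a ω) ∂μ)
      - (∫ ω, ∑ d, Real.negMulLog (q d ω) ∂μ)
      ≤ ∫ ω, ∑ a, L a ω * p a ω ∂μ := by
    rw [← integral_sub hIntF hIntQ]
    exact integral_mono_ae (hIntF.sub hIntQ) hIntT key
  -- identification of the right-hand side
  have hpull : ∀ a, ∫ ω, L a ω * p a ω ∂μ = ∫ ω, (L a * ind a) ω ∂μ := by
    intro a
    have h1 : μ[L a * ind a | sgm (fun ω => (W ω, G ω))] =ᵐ[μ] L a * p a :=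
      condExp_mul_of_stronglyMeasurable_left ((hLm a).stronglyMeasurable) (hIntLind a) (hindInt a)
    calc ∫ ω, L a ω * p a ω ∂μ
        = ∫ ω, (μ[L a * ind a | sgm (fun ω => (W ω, G ω))]) ω ∂μ :=
          (integral_congr_ae h1).symm
      _ = ∫ ω, (L a * ind a) ω ∂μ := integral_condExp hm_le
  have hRHS : ∫ ω, ∑ a, L a ω * p a ω ∂μ
      = ∫ ω, Real.log
          (({ζ : α | φ (ζ, W ω, G ω) = φ (Z' ω, W ω, G ω)}.ncard : ℝ)) ∂μ := by
    have h1 : ∫ ω, ∑ a, L a ω * p a ω ∂μ = ∑ a, ∫ ω, L a ω * p a ω ∂μ := by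
      rw [integral_finset_sum _ fun a _ => hIntLp a]
    have h2 : ∑ a, ∫ ω, (L a * ind a) ω ∂μ = ∫ ω, ∑ a, (L a * ind a) ω ∂μ :=
      (integral_finset_sum _ fun a _ => hIntLind a).symm
    rw [h1, Finset.sum_congr rfl fun a _ => hpull a, h2]
    refine integral_congr_ae (Filter.Eventually.of_forall fun ω => ?_)
    show ∑ a : α, (L a * ind a) ω
      = Real.log (({ζ : α | φ (ζ, W ω, G ω) = φ (Z' ω, W ω, G ω)}.ncard : ℝ))
    have hsum : ∑ a, (L a * ind a) ω = L (Z' ω) ω := by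
      rw [Finset.sum_eq_single (Z' ω)]
      · have h1 : ind (Z' ω) ω = 1 := by simp [hind_def, Set.indicator_apply]
        simp [h1]
      · intro b _ hb
        have h0 : ind b ω = 0 := by
          simp only [hind_def, Set.indicator_apply, Set.mem_preimage, Set.mem_singleton_iff]
          rw [if_neg fun h => hb h.symm]
        simp [h0]
      · intro h; exact absurd (Finset.mem_univ _) h
    rw [hsum]
    have hncard : ({ζ : α | φ (ζ, W ω, G ω) = φ (Z' ω, W ω, G ω)}).ncard
        = (Finset.univ.filter
            fun ζ : α => φ (ζ, W ω, G ω) = φ (Z' ω, W ω, G ω)).card := by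
      rw [Set.ncard_eq_toFinset_card', Set.toFinset_setOf]
    rw [hncard]
  -- conclusion
  have hfirst : shCondEntropy μ Z' W = ∫ ω, ∑ a, Real.negMulLog (p a ω) ∂μ := by
    have h0 : shCondEntropy μ Z' W = ∫ ω, ∑ a, Real.negMulLog (pW a ω) ∂μ := by
      simp only [hpW_def, hind_def, sgm]
      unfold shCondEntropy
      simp only [tsum_fintype]
    rw [h0]
    refine integral_congr_ae ?_
    have hall : ∀ᵐ ω ∂μ, ∀ a, pW a ω = p a ω := ae_all_iff.2 fun a => hpW_eq a
    filter_upwards [hall] with ω hω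
    exact Finset.sum_congr rfl fun a _ => by rw [hω a]
  have hsecond : shCondEntropy μ (fun ω => φ (Z' ω, W ω, G ω)) (fun ω => (W ω, G ω))
      = ∫ ω, ∑ d, Real.negMulLog (q d ω) ∂μ := by
    simp only [hq_def, hindZ_def, sgm]
    unfold shCondEntropy
    simp only [tsum_fintype]
  rw [hfirst, hsecond, ← hRHS]
  exact hmain
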